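/- For every natural number k ≥ 2 and all complex numbers z, u₁, u₂, u₃, define c(w,a,b) := b * Complex.exp (((k:ℂ)-1) * a * w^(k-1)) + a and z₂ := Complex.exp (u₁ * z^(k-1)) * z. Then c(z, c(z,u₁,u₂), u₃) = c(z, u₁, c(z₂, u₂, u₃)). -/
import Mathlib


/-- The composition parameter law of the explicit local model groupoid `Stok_k`:
`c w a b = b * exp ((k-1) * a * w^(k-1)) + a`. -/
noncomputable def stokParam (k : ℕ) (w a b : ℂ) : ℂ :=
  b * Complex.exp (((k : ℂ) - 1) * a * w ^ (k - 1)) + a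

/-- Associativity of the composition law of the explicit local model groupoid `Stok_k`
(Gualtieri–Li–Pym): for `k ≥ 2`, all `z, u₁, u₂, u₃ : ℂ`, and
`z₂ := exp (u₁ * z^(k-1)) * z`, one has
`c(z, c(z,u₁,u₂), u₃) = c(z, u₁, c(z₂,u₂,u₃))`. -/
theorem stok_comp_assoc (k : ℕ) (hk : 2 ≤ k) (z u₁ u₂ u₃ : ℂ) :
    stokParam k z (stokParam k z u₁ u₂) u₃
      = stokParam k z u₁ (stokParam k (Complex.exp (u₁ * z ^ (k - 1)) * z) u₂ u₃) := by
  have h : ((k - 1 : ℕ) : ℂ) = (k : ℂ) - 1 := by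
    push_cast [Nat.cast_sub (by omega : 1 ≤ k)]; ring
  simp only [stokParam, mul_pow, ← Complex.exp_nat_mul, h, mul_add, add_mul,
    ← Complex.exp_add]
  ring_nf
  rw [mul_assoc u₃, ← Complex.exp_add]
  congr 2
  ring_nf
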